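/- A countably complete tower of measures yields a wellfounded direct limit: if ⟨μ_n : n < ω⟩ is a tower of countably complete ultrafilters on Z (μ_n on Z^n, each projecting to the previous ones) such that for every sequence ⟨A_n : n < ω⟩ with A_n ∈ μ_n there is f ∈ Z^ω with f↾n ∈ A_n for all n, then the direct limit of the ultrapowers Ult(V, μ_n) along the canonical maps π_{μ_m,μ_n} is wellfounded. -/

import Mathlib

/-- Restriction of an `n`-tuple to its first `m` coordinates. -/
def restrictTuple {Z : Type} {m n : ℕ} (h : m ≤ n) (u : Fin n → Z) : Fin m → Z :=
  fun i => u (Fin.castLE h i)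

/-- `μ` (on `Z^n`) projects to `ν` (on `Z^m`). -/
def Projects {Z : Type} {m n : ℕ} (h : m ≤ n) (μ : Ultrafilter (Fin n → Z))
    (ν : Ultrafilter (Fin m → Z)) : Prop :=
  ∀ A : Set (Fin m → Z), A ∈ ν ↔ {u | restrictTuple h u ∈ A} ∈ μ

/-- Countable completeness (σ-completeness) of an ultrafilter. -/
def CountablyComplete {α : Type*} (μ : Ultrafilter α) : Prop :=
  ∀ s : ℕ → Set α, (∀ n, s n ∈ μ) → (⋂ n, s n) ∈ μ

/-- The membership relation of the direct limit of the ultrapowers `Ult(V, μ_n)` along the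
canonical maps, on representatives `(n, f)` with `f : Z^n → V`. -/
def dlMem {Z : Type} {V : Type*} (E : V → V → Prop) (μ : ∀ n : ℕ, Ultrafilter (Fin n → Z))
    (a b : Σ n : ℕ, (Fin n → Z) → V) : Prop :=
  {u : Fin (max a.1 b.1) → Z |
      E (a.2 (restrictTuple (le_max_left a.1 b.1) u))
        (b.2 (restrictTuple (le_max_right a.1 b.1) u))} ∈ μ (max a.1 b.1)

private lemma descending_of_not_wf {α : Type*} {r : α → α → Prop} (h : ¬ WellFounded r) :
    ∃ a : ℕ → α, ∀ n, r (a (n+1)) (a n) := by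
  have hx : ∃ x, ¬ Acc r x := by
    by_contra h'
    push_neg at h'
    exact h ⟨fun x => h' x⟩
  obtain ⟨x, hx⟩ := hx
  have step : ∀ y : {a // ¬ Acc r a}, ∃ z : {a // ¬ Acc r a}, r z.1 y.1 := by
    rintro ⟨y, hy⟩
    obtain ⟨z, hz, hrz⟩ := exists_not_acc_lt_of_not_acc hy
    exact ⟨⟨z, hz⟩, hrz⟩
  choose F hF using step
  refine ⟨fun n => (F^[n] ⟨x, hx⟩).1, fun n => ?_⟩
  simp only [Function.iterate_succ', Function.comp_apply]
  exact hF _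

private lemma no_descending_of_wf {α : Type*} {r : α → α → Prop} (h : WellFounded r)
    (a : ℕ → α) (ha : ∀ n, r (a (n+1)) (a n)) : False := by
  have key : ∀ x, ∀ a : ℕ → α, (∀ n, r (a (n+1)) (a n)) → a 0 ≠ x := by
    intro x
    induction x using WellFounded.induction h with
    | _ x ih =>
      intro a ha h0
      exact ih (a 1) (h0 ▸ ha 0) (fun n => a (n+1)) (fun n => ha (n+1)) rfl
  exact key (a 0) a ha rfl

/-- a countably complete tower of measures yields a wellfounded direct limit:
if `⟨μ_n⟩` is a tower of countably complete ultrafilters on `Z` and every sequence of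
measure-one sets `⟨A_n⟩` admits a thread `f ∈ Z^ω` with `f↾n ∈ A_n` for all `n`, then the
direct limit of the ultrapowers of `(V, E)` along the canonical maps is wellfounded. -/
theorem stmt11 {Z V : Type} (E : V → V → Prop) (hE : WellFounded E)
    (μ : ∀ n : ℕ, Ultrafilter (Fin n → Z))
    (hcc : ∀ n, CountablyComplete (μ n))
    (hproj : ∀ (m n : ℕ) (h : m ≤ n), Projects h (μ n) (μ m))
    (hfib : ∀ A : (∀ n : ℕ, Set (Fin n → Z)), (∀ n, A n ∈ μ n) →
      ∃ f : ℕ → Z, ∀ n : ℕ, (fun i : Fin n => f i) ∈ A n) :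
    WellFounded (dlMem E μ) := by
  by_contra hw
  obtain ⟨a, ha⟩ := descending_of_not_wf hw
  set N : ℕ → ℕ := fun k => max (a (k+1)).1 (a k).1 with hN
  let B : ∀ k, Set (Fin (N k) → Z) := fun k =>
    {u | E ((a (k+1)).2 (restrictTuple (le_max_left _ _) u))
      ((a k).2 (restrictTuple (le_max_right _ _) u))}
  have hB : ∀ k, B k ∈ μ (N k) := ha
  let A : ∀ n, Set (Fin n → Z) := fun n =>
    ⋂ k, if h : N k ≤ n then {u | restrictTuple h u ∈ B k} else Set.univ
  have hA : ∀ n, A n ∈ μ n := by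
    intro n
    refine hcc n _ (fun k => ?_)
    by_cases h : N k ≤ n
    · rw [dif_pos h]
      exact (hproj (N k) n h (B k)).mp (hB k)
    · rw [dif_neg h]
      exact Filter.univ_mem
  obtain ⟨f, hf⟩ := hfib A hA
  have key : ∀ k, E ((a (k+1)).2 (fun i => f i)) ((a k).2 (fun i => f i)) := by
    intro k
    have h2 := Set.mem_iInter.mp (hf (N k)) k
    rw [dif_pos (le_refl (N k))] at h2
    exact h2
  exact no_descending_of_wf hE (fun k => (a k).2 (fun i => f i)) key
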